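/- Fix s ≥ 1, P_s = {a_1,…,a_s, c | a_i < c}, with μ the Möbius function of P_s^*, and let T^s_k(X) be defined by T^s_0 = 1, T^s_1 = (s−1)X, T^s_{k+2} + T^s_k = sX·T^s_{k+1}. Then for all 0 ≤ m ≤ n, μ(a_1^m, c^n) equals the coefficient of X^{n−m} in T^s_{m+n}(X). In particular, for s = 2 (the poset {a, b, c | a < c, b < c}), μ(a^i, c^j) is the coefficient of X^{j−i} in the Chebyshev polynomial of the first kind T_{i+j}(X), resolving the Björner–Sagan–Vatter conjecture. -/

import Mathlib

/-- The alphabet `P_s = {a_1, …, a_s, c}` with `a_i < c`: `some i` is `a_i`, `none` is `c`. -/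
abbrev Letter (s : ℕ) := Option (Fin s)

/-- The generalized subword order on words over `P_s`. -/
def WLE {s : ℕ} (u w : List (Letter s)) : Prop :=
  ∃ w', w'.Sublist w ∧ List.Forall₂ (fun x y => x = y ∨ y = none) u w'

open Polynomial

/-- Generalized Chebyshev polynomials over ℤ. -/
noncomputable def genCheb (s : ℕ) : ℕ → Polynomial ℤ
  | 0 => 1
  | 1 => Polynomial.C ((s : ℤ) - 1) * Polynomial.X
  | (k + 2) => Polynomial.C (s : ℤ) * Polynomial.X * genCheb s (k + 1) - genCheb s k

namespace BSV

variable {s : ℕ}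

theorem wle_refl (u : List (Letter s)) : WLE u u :=
  ⟨u, List.Sublist.refl u, List.forall₂_same.2 fun _ _ => Or.inl rfl⟩

theorem wle_nil (w : List (Letter s)) : WLE [] w :=
  ⟨[], List.nil_sublist w, List.Forall₂.nil⟩

theorem wle_cons_right {z w : List (Letter s)} (x : Letter s) (h : WLE z w) : WLE z (x :: w) := by
  obtain ⟨w', hs', hf⟩ := h
  exact ⟨w', hs'.trans (List.sublist_cons_self x w), hf⟩

theorem wle_of_cons_left {y : Letter s} {z w : List (Letter s)} (h : WLE (y :: z) w) : WLE z w := by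
  obtain ⟨w', hs', hf⟩ := h
  cases hf with
  | cons hr hf' =>
    rename_i y₂ w₂
    exact ⟨w₂, (List.sublist_cons_self y₂ w₂).trans hs', hf'⟩

theorem wle_cons_cons {y x : Letter s} {z w : List (Letter s)} (hyx : y = x ∨ x = none)
    (h : WLE z w) : WLE (y :: z) (x :: w) := by
  obtain ⟨w', hs', hf⟩ := h
  exact ⟨x :: w', hs'.cons₂ x, List.Forall₂.cons hyx hf⟩

theorem wle_cons_iff {y x : Letter s} {z w : List (Letter s)} :
    WLE (y :: z) (x :: w) ↔ ((y = x ∨ x = none) ∧ WLE z w) ∨ WLE (y :: z) w := by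
  constructor
  · rintro ⟨w', hs', hf⟩
    cases hf with
    | cons hr hf' =>
      rename_i y₂ w₂
      cases hs' with
      | cons _ h' => exact Or.inr ⟨y₂ :: w₂, h', List.Forall₂.cons hr hf'⟩
      | cons_cons _ h' => exact Or.inl ⟨hr, ⟨w₂, h', hf'⟩⟩
  · rintro (⟨hyx, h⟩ | h)
    · exact wle_cons_cons hyx h
    · exact wle_cons_right x h

theorem wle_length {u w : List (Letter s)} (h : WLE u w) : u.length ≤ w.length := by
  obtain ⟨w', hs', hf⟩ := h
  rw [hf.length_eq]
  exact hs'.length_le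

theorem wle_nil_right {z : List (Letter s)} (h : WLE z []) : z = [] := by
  obtain ⟨w', hs', hf⟩ := h
  rw [List.sublist_nil.1 hs'] at hf
  exact List.forall₂_nil_right_iff.1 hf


def alphaL (y : Letter s) : ℤ :=
  match y with
  | none => -1
  | some i => if (i : ℕ) = 0 then 1 else 0
def betaL (y : Letter s) (t : Option (Letter s)) : ℤ :=
  match y with
  | none => if t = some none then (s : ℤ) else (s : ℤ) - 1
  | some i => if t = some (some i) then 0 else -1
def nuF : ℕ → List (Letter s) → ℤ
  | m, [] => if m = 0 then 1 else 0
  | 0, y :: z => betaL y z.head? * nuF 0 z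
  | m+1, y :: z => alphaL y * nuF m z + betaL y z.head? * nuF (m+1) z
def nuP : ℕ → List (Letter s) → ℤ
  | 0, _ => 0
  | m+1, z => nuF m z

theorem nuF_cons (m : ℕ) (y : Letter s) (z : List (Letter s)) :
    nuF m (y :: z) = alphaL y * nuP m z + betaL y z.head? * nuF m z := by
  cases m with
  | zero => simp [nuF, nuP]
  | succ m => rfl

def SF : List (Letter s) → Finset (List (Letter s))
  | [] => {[]}
  | x :: w => ((Finset.univ.filter fun y => y = x ∨ x = none) ×ˢ SF w).image
      (fun p => p.1 :: p.2) ∪ SF w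

def Pnle (x : Letter s) : List (Letter s) → Prop
  | [] => True
  | y :: _ => ¬(y = x ∨ x = none)

instance (x : Letter s) : DecidablePred (Pnle x) := fun z =>
  match z with
  | [] => .isTrue trivial
  | y :: _ => inferInstanceAs (Decidable ¬_)

theorem mem_SF : ∀ {w z : List (Letter s)}, z ∈ SF w ↔ WLE z w
  | [], z => by
    simp only [SF, Finset.mem_singleton]
    exact ⟨fun h => h ▸ wle_nil [], wle_nil_right⟩
  | x :: w, z => by
    simp only [SF, Finset.mem_union, Finset.mem_image, Finset.mem_product, Finset.mem_filter,
      Finset.mem_univ, true_and, Prod.exists]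
    cases z with
    | nil =>
      simp only [mem_SF (w := w)]
      constructor
      · intro _; exact wle_nil _
      · rintro -; exact Or.inr (wle_nil w)
    | cons y z' =>
      rw [wle_cons_iff]
      constructor
      · rintro (⟨a, b, ⟨ha, hb⟩, heq⟩ | h)
        · obtain ⟨rfl, rfl⟩ : a = y ∧ b = z' := by
            constructor <;> injection heq <;> assumption
          exact Or.inl ⟨ha, mem_SF.1 hb⟩
        · exact Or.inr (mem_SF.1 h)
      · rintro (⟨hyx, h⟩ | h)
        · exact Or.inl ⟨y, z', ⟨hyx, mem_SF.2 h⟩, rfl⟩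
        · exact Or.inr (mem_SF.2 h)

theorem SF_cons_eq (x : Letter s) (w : List (Letter s)) :
    SF (x :: w) = ((Finset.univ.filter fun y => y = x ∨ x = none) ×ˢ SF w).image
      (fun p => p.1 :: p.2) ∪ (SF w).filter (Pnle x) := by
  ext z
  simp only [SF, Finset.mem_union, Finset.mem_image, Finset.mem_product, Finset.mem_filter,
    Finset.mem_univ, true_and, Prod.exists]
  constructor
  · rintro (h | h)
    · exact Or.inl h
    · cases z with
      | nil => exact Or.inr ⟨h, trivial⟩
      | cons y z' =>
        by_cases hyx : y = x ∨ x = none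
        · exact Or.inl ⟨y, z', ⟨hyx, mem_SF.2 (wle_of_cons_left (mem_SF.1 h))⟩, rfl⟩
        · exact Or.inr ⟨h, hyx⟩
  · rintro (h | ⟨h, _⟩)
    · exact Or.inl h
    · exact Or.inr h

theorem sum_SF_cons (f : List (Letter s) → ℤ) (x : Letter s) (w : List (Letter s)) :
    ∑ z ∈ SF (x :: w), f z
      = (∑ y ∈ Finset.univ.filter (fun y => y = x ∨ x = none), ∑ z ∈ SF w, f (y :: z))
        + ∑ z ∈ SF w, (if Pnle x z then f z else 0) := by
  rw [SF_cons_eq, Finset.sum_union, Finset.sum_image, Finset.sum_product, ← Finset.sum_filter]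
  · intro p _ q _ h
    have h1 : p.1 = q.1 ∧ p.2 = q.2 := by constructor <;> injection h <;> assumption
    exact Prod.ext h1.1 h1.2
  · rw [Finset.disjoint_left]
    rintro z hz hz'
    simp only [Finset.mem_image, Finset.mem_product, Finset.mem_filter, Finset.mem_univ, true_and,
      Prod.exists] at hz hz'
    obtain ⟨a, b, ⟨ha, hb⟩, rfl⟩ := hz
    exact hz'.2 ha


theorem val_eq_iff (i0 : Fin s) (h0 : (i0 : ℕ) = 0) (i : Fin s) : ((i : ℕ) = 0) ↔ (i = i0) := by
  rw [← h0, Fin.ext_iff]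

theorem sum_alpha (i0 : Fin s) (h0 : (i0 : ℕ) = 0) :
    ∑ y : Letter s, alphaL y = 0 := by
  rw [Fintype.sum_option]
  simp only [alphaL]
  simp_rw [fun i => propext (val_eq_iff i0 h0 i)]
  rw [Finset.sum_ite_eq' Finset.univ i0 (fun _ => (1:ℤ))]
  simp

theorem sum_beta (i0 : Fin s) (h0 : (i0 : ℕ) = 0) (t : Option (Letter s)) :
    ∑ y : Letter s, betaL y t = if t = none then -1 else 0 := by
  rw [Fintype.sum_option]
  match t with
  | none =>
    simp only [betaL, if_neg (by simp : (none : Option (Letter s)) ≠ some none), reduceCtorEq]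
    simp [Finset.card_univ]
    ring
  | some none =>
    simp only [betaL, if_pos rfl]
    have : ∀ i : Fin s, (if (some (none : Letter s)) = some (some i) then (0:ℤ) else -1) = -1 := by
      intro i; rw [if_neg]; simp
    simp_rw [this]
    simp [Finset.card_univ]
  | some (some i₁) =>
    simp only [betaL]
    rw [if_neg (by simp)]
    have : ∀ i : Fin s, (if (some (some i₁) : Option (Letter s)) = some (some i) then (0:ℤ) else -1)
        = (if i = i₁ then 1 else 0) - 1 := by
      intro i
      by_cases h : i = i₁
      · subst h; simp
      · rw [if_neg (by simp; exact fun hc => h hc.symm), if_neg h]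
        norm_num
    simp_rw [this]
    rw [Finset.sum_sub_distrib, Finset.sum_ite_eq' Finset.univ i₁ (fun _ => (1:ℤ))]
    simp [Finset.card_univ]

theorem sum_letters (i0 : Fin s) (h0 : (i0 : ℕ) = 0) (m : ℕ) (z : List (Letter s)) :
    ∑ y : Letter s, nuF m (y :: z) = if z = [] then -(nuF m ([] : List (Letter s))) else 0 := by
  simp_rw [nuF_cons]
  rw [Finset.sum_add_distrib, ← Finset.sum_mul, ← Finset.sum_mul, sum_alpha i0 h0,
    sum_beta i0 h0]
  cases z with
  | nil => simp
  | cons y₀ z₀ => simp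

theorem key (i0 : Fin s) (h0 : (i0 : ℕ) = 0) :
    ∀ (w : List (Letter s)) (m : ℕ),
      ∑ z ∈ SF w, nuF m z = if w = List.replicate m (some i0) then 1 else 0 := by
  intro w
  induction w with
  | nil =>
    intro m
    have : SF ([] : List (Letter s)) = {[]} := rfl
    rw [this, Finset.sum_singleton]
    have : (([] : List (Letter s)) = List.replicate m (some i0)) ↔ m = 0 := by
      cases m <;> simp [List.replicate_succ]
    cases m with
    | zero => simp [nuF]
    | succ m => rw [if_neg (by simp [this]), show nuF (m+1) ([]:List (Letter s)) = 0 from rfl]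
  | cons x w ih =>
    intro m
    rw [sum_SF_cons]
    have hnilmem : ([] : List (Letter s)) ∈ SF w := mem_SF.2 (wle_nil w)
    cases x with
    | none =>
      have hfil : (Finset.univ.filter fun y : Letter s => y = none ∨ (none : Letter s) = none)
          = Finset.univ := by
        apply Finset.filter_true_of_mem; intro y _; exact Or.inr rfl
      rw [hfil, Finset.sum_comm]
      simp_rw [sum_letters i0 h0 m]
      rw [Finset.sum_ite_eq' (SF w) ([] : List (Letter s)) (fun _ => -(nuF m ([] : List (Letter s)))), if_pos hnilmem]
      have h2 : ∀ z ∈ SF w, (if Pnle (none : Letter s) z then nuF m z else 0)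
          = if z = [] then nuF m z else 0 := by
        intro z _
        cases z with
        | nil => simp [Pnle]
        | cons a b => simp [Pnle]
      rw [Finset.sum_congr rfl h2, Finset.sum_ite_eq' (SF w) ([] : List (Letter s)) (fun z => nuF m z), if_pos hnilmem]
      rw [if_neg]
      · ring
      · cases m with
        | zero => simp
        | succ m => simp [List.replicate_succ]
    | some j =>
      have hfil : (Finset.univ.filter fun y : Letter s => y = some j ∨ (some j : Letter s) = none)
          = {some j} := by
        ext y; simp
      rw [hfil, Finset.sum_singleton, ← Finset.sum_add_distrib]
      have hpt : ∀ z ∈ SF w, nuF m (some j :: z) + (if Pnle (some j : Letter s) z then nuF m z else 0)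
          = alphaL (some j) * nuP m z := by
        intro z _
        rw [nuF_cons]
        cases z with
        | nil =>
          have : Pnle (some j : Letter s) [] := trivial
          rw [if_pos this]
          have hb : betaL (some j : Letter s) (List.head? ([] : List (Letter s))) = -1 := by
            simp [betaL]
          rw [hb]; ring
        | cons y₀ z₀ =>
          by_cases hy : y₀ = some j
          · rw [if_neg (by simp [Pnle, hy])]
            have hb : betaL (some j : Letter s) (List.head? (y₀ :: z₀)) = 0 := by
              simp [betaL, hy]
            rw [hb]; ring
          · have : Pnle (some j : Letter s) (y₀ :: z₀) := by simp [Pnle, hy]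
            rw [if_pos this]
            have hb : betaL (some j : Letter s) (List.head? (y₀ :: z₀)) = -1 := by
              simp only [betaL, List.head?_cons]
              simp [hy]
            rw [hb]; ring
      rw [Finset.sum_congr rfl hpt]
      cases m with
      | zero =>
        simp only [nuP, mul_zero, Finset.sum_const_zero]
        rw [if_neg (by simp)]
      | succ m =>
        simp only [nuP]
        rw [← Finset.mul_sum, ih m]
        have hrep : (some j :: w = List.replicate (m+1) (some i0)) ↔ (j = i0 ∧ w = List.replicate m (some i0)) := by
          rw [List.replicate_succ]
          constructor
          · intro h; injection h with h1 h2; exact ⟨by injection h1, h2⟩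
          · rintro ⟨rfl, rfl⟩; rfl
        by_cases hj : (j : ℕ) = 0
        · have hj' : j = i0 := (val_eq_iff i0 h0 j).1 hj
          rw [show alphaL (some j : Letter s) = 1 by simp [alphaL, hj], one_mul]
          exact if_congr (by rw [hrep]; simp [hj']) rfl rfl
        · rw [show alphaL (some j : Letter s) = 0 by simp [alphaL, hj], zero_mul]
          rw [eq_comm, if_neg]
          intro hcon
          exact hj ((val_eq_iff i0 h0 j).2 (hrep.1 hcon).1)


theorem nuF_eq_zero {i0 : Fin s} (h0 : (i0 : ℕ) = 0) :
    ∀ (z : List (Letter s)) (m : ℕ), ¬ WLE (List.replicate m (some i0)) z → nuF m z = 0 := by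
  intro z
  induction z with
  | nil =>
    intro m h
    cases m with
    | zero => exact absurd (wle_nil []) h
    | succ m => rfl
  | cons y z' ih =>
    intro m h
    have h1 : ¬ WLE (List.replicate m (some i0)) z' := fun hh => h (wle_cons_right y hh)
    rw [nuF_cons, ih m h1, mul_zero, add_zero]
    cases m with
    | zero => simp [nuP]
    | succ m =>
      simp only [nuP]
      by_cases ha : alphaL y = 0
      · rw [ha, zero_mul]
      · have hyx : (some i0 : Letter s) = y ∨ y = none := by
          cases y with
          | none => exact Or.inr rfl
          | some i =>
            left
            have : (i : ℕ) = 0 := by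
              by_contra hc; exact ha (by simp [alphaL, hc])
            congr 1
            exact Fin.ext (by rw [this, h0])
        have h2 : ¬ WLE (List.replicate m (some i0)) z' := by
          intro hh
          apply h
          rw [List.replicate_succ]
          exact wle_cons_cons hyx hh
        rw [ih m h2, mul_zero]

theorem nuF_rep_self (i0 : Fin s) (h0 : (i0 : ℕ) = 0) (m : ℕ) :
    nuF m (List.replicate m (some i0 : Letter s)) = 1 := by
  induction m with
  | zero => rfl
  | succ m ih =>
    rw [List.replicate_succ, nuF_cons]
    have ha : alphaL (some i0 : Letter s) = 1 := by simp [alphaL, h0]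
    simp only [nuP, ha, one_mul]
    cases m with
    | zero =>
      have : betaL (some i0 : Letter s) (List.head? (List.replicate 0 (some i0 : Letter s))) = -1 := by
        simp [betaL]
      rw [this, ih]
      simp [nuF]
    | succ m' =>
      have : betaL (some i0 : Letter s) (List.head? (List.replicate (m'+1) (some i0 : Letter s))) = 0 := by
        simp [betaL, List.replicate_succ]
      rw [this, ih, zero_mul]
      ring

def rankW (w : List (Letter s)) : ℕ := w.length * w.length + 2 * w.length + w.count none

theorem count_le_of_forall₂ : ∀ {z w : List (Letter s)},
    List.Forall₂ (fun x y => x = y ∨ y = none) z w → z.count none ≤ w.count none := by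
  intro z w h
  induction h with
  | nil => simp
  | @cons x y z' w' hr hf ih =>
    rcases hr with rfl | rfl
    · by_cases hy : x = (none : Letter s) <;> simp [List.count_cons, hy] <;> omega
    · by_cases hx : x = (none : Letter s) <;> simp [List.count_cons, hx] <;> omega

theorem count_lt_of_forall₂ : ∀ {z w : List (Letter s)},
    List.Forall₂ (fun x y => x = y ∨ y = none) z w → z ≠ w → z.count none < w.count none := by
  intro z w h
  induction h with
  | nil => intro h; exact absurd rfl h
  | @cons x y z' w' hr hf ih =>
    intro hne
    rcases hr with rfl | rfl
    · have hne' : z' ≠ w' := fun hc => hne (by rw [hc])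
      have := ih hne'
      by_cases hy : x = (none : Letter s) <;> simp [List.count_cons, hy] <;> omega
    · by_cases hx : x = none
      · subst hx
        have hne' : z' ≠ w' := fun hc => hne (by rw [hc])
        have := ih hne'
        simp [List.count_cons]; omega
      · have := count_le_of_forall₂ hf
        simp [List.count_cons, hx]; omega

theorem rank_lt {z w : List (Letter s)} (h : WLE z w) (hne : z ≠ w) : rankW z < rankW w := by
  obtain ⟨w', hsub, hf⟩ := h
  have hlen : z.length = w'.length := hf.length_eq
  rcases lt_or_eq_of_le (hlen ▸ hsub.length_le : z.length ≤ w.length) with hlt | heq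
  · have h1 : z.count none ≤ z.length := by
      have := List.countP_le_length (p := (· == (none : Letter s))) (l := z)
      simpa [List.count] using this
    unfold rankW
    nlinarith [hlt]
  · have hww : w' = w := hsub.eq_of_length (by omega)
    subst hww
    have := count_lt_of_forall₂ hf hne
    unfold rankW
    rw [hlen]
    omega

theorem genCheb_coeff_eq_zero (s : ℕ) : ∀ (k j : ℕ), k < j → (genCheb s k).coeff j = 0
  | 0, j, h => by
    simp only [genCheb, Polynomial.coeff_one]
    rw [if_neg (by omega)]
  | 1, j, h => by
    simp only [genCheb, Polynomial.coeff_C_mul, Polynomial.coeff_X]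
    rw [if_neg (by omega), mul_zero]
  | (k+2), j, h => by
    obtain ⟨j', rfl⟩ : ∃ j', j = j' + 1 := ⟨j - 1, by omega⟩
    simp only [genCheb, Polynomial.coeff_sub, mul_assoc, Polynomial.coeff_C_mul,
      Polynomial.coeff_X_mul]
    rw [genCheb_coeff_eq_zero s (k+1) j' (by omega), genCheb_coeff_eq_zero s k (j'+1) (by omega)]
    ring

theorem nuF_rep_none_zero {i0 : Fin s} (h0 : (i0 : ℕ) = 0) {m n : ℕ} (h : n < m) :
    nuF m (List.replicate n (none : Letter s)) = 0 := by
  apply nuF_eq_zero h0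
  intro hc
  have := wle_length hc
  simp only [List.length_replicate] at this
  omega

theorem mu_eq_nu (i0 : Fin s) (h0 : (i0 : ℕ) = 0)
    (μ : List (Letter s) → List (Letter s) → ℤ)
    (hrefl : ∀ u, μ u u = 1)
    (hnle : ∀ u v, ¬ WLE u v → μ u v = 0)
    (hsum : ∀ u v, WLE u v → u ≠ v →
      ∑ᶠ z ∈ {z : List (Letter s) | WLE u z ∧ WLE z v}, μ u z = 0) :
    ∀ (N : ℕ) (w : List (Letter s)), rankW w < N → ∀ (m : ℕ),
      μ (List.replicate m (some i0)) w = nuF m w := by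
  intro N
  induction N with
  | zero => intro w h; omega
  | succ N ihN =>
    intro w hw m
    classical
    set u := List.replicate m (some i0 : Letter s) with hu
    by_cases hle : WLE u w
    · by_cases heq : u = w
      · rw [← heq, hrefl]
        exact (nuF_rep_self i0 h0 m).symm
      · have hsum' := hsum u w hle heq
        set T : Finset (List (Letter s)) := (SF w).filter (fun z => WLE u z) with hT
        have hset : {z : List (Letter s) | WLE u z ∧ WLE z w} = (T : Set (List (Letter s))) := by
          ext z
          simp only [Set.mem_setOf_eq, hT, Finset.coe_filter, mem_SF]
          exact ⟨fun ⟨h1, h2⟩ => ⟨h2, h1⟩, fun ⟨h1, h2⟩ => ⟨h2, h1⟩⟩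
        rw [hset, finsum_mem_coe_finset] at hsum'
        have hwT : w ∈ T := Finset.mem_filter.2 ⟨mem_SF.2 (wle_refl w), hle⟩
        rw [← Finset.add_sum_erase T (fun z => μ u z) hwT] at hsum'
        have hERm : ∀ z ∈ T.erase w, μ u z = nuF m z := by
          intro z hz
          have hzw : z ≠ w := Finset.ne_of_mem_erase hz
          have hzT := Finset.mem_of_mem_erase hz
          have h1 : WLE z w := mem_SF.1 (Finset.mem_filter.1 hzT).1
          exact ihN z (lt_of_lt_of_le (rank_lt h1 hzw) (Nat.lt_succ_iff.1 hw)) m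
        rw [Finset.sum_congr rfl hERm] at hsum'
        have h2 : ∑ z ∈ T.erase w, nuF m z = (∑ z ∈ T, nuF m z) - nuF m w := by
          rw [← Finset.add_sum_erase T (nuF m) hwT]; ring
        have h3 : ∑ z ∈ T, nuF m z = ∑ z ∈ SF w, nuF m z := by
          rw [hT]
          apply Finset.sum_filter_of_ne
          intro z _ hnz
          by_contra hc
          exact hnz (nuF_eq_zero h0 z m hc)
        have h4 : ∑ z ∈ SF w, nuF m z = 0 := by
          rw [key i0 h0 w m, if_neg (fun hc => heq (hu ▸ hc.symm))]
        rw [h2, h3, h4] at hsum'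
        linarith
    · rw [hnle _ _ hle]
      exact (nuF_eq_zero h0 w m hle).symm

theorem cheb_step (s : ℕ) (k d : ℕ) :
    (genCheb s (k+1+1)).coeff (d+1)
      = (s : ℤ) * (genCheb s (k+1)).coeff d - (genCheb s k).coeff (d+1) := by
  have h : genCheb s (k+1+1) = Polynomial.C (s:ℤ) * Polynomial.X * genCheb s (k+1) - genCheb s k := rfl
  rw [h, Polynomial.coeff_sub, mul_assoc, Polynomial.coeff_C_mul, Polynomial.coeff_X_mul]

theorem cheb_step0 (s : ℕ) (k : ℕ) :
    (genCheb s (k+1+1)).coeff 0 = -((genCheb s k).coeff 0) := by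
  have h : genCheb s (k+1+1) = Polynomial.C (s:ℤ) * Polynomial.X * genCheb s (k+1) - genCheb s k := rfl
  rw [h, Polynomial.coeff_sub, mul_assoc, Polynomial.mul_coeff_zero]
  simp [Polynomial.mul_coeff_zero, Polynomial.coeff_X_zero]

theorem nuF_cheb (i0 : Fin s) (h0 : (i0 : ℕ) = 0) :
    ∀ (n m : ℕ), m ≤ n → nuF m (List.replicate n (none : Letter s))
      = (genCheb s (m + n)).coeff (n - m) := by
  intro n
  induction n with
  | zero =>
    intro m hm
    interval_cases m
    simp [genCheb, nuF]
  | succ n ih =>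
    intro m hm
    rw [List.replicate_succ, nuF_cons]
    have hal : alphaL (none : Letter s) = -1 := rfl
    cases n with
    | zero =>
      have hbe : betaL (none : Letter s) (List.head? (List.replicate 0 (none : Letter s))) = (s : ℤ) - 1 := by
        simp [betaL]
      interval_cases m
      · simp only [nuP, hal, hbe, mul_zero, zero_add]
        have : nuF 0 (List.replicate 0 (none : Letter s)) = 1 := rfl
        rw [this]
        simp [genCheb, Polynomial.coeff_C_mul, Polynomial.coeff_X]
      · simp only [nuP, hal, hbe]
        have h1 : nuF 0 (List.replicate 0 (none : Letter s)) = 1 := rfl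
        have h2 : nuF 1 (List.replicate 0 (none : Letter s)) = 0 := rfl
        rw [h1, h2]
        have : genCheb s 2 = Polynomial.C (s:ℤ) * Polynomial.X * genCheb s 1 - genCheb s 0 := rfl
        rw [show (1:ℕ) + 1 = 2 from rfl, this]
        simp [genCheb, Polynomial.mul_coeff_zero, Polynomial.coeff_X_zero]
    | succ n' =>
      have hbe : betaL (none : Letter s) (List.head? (List.replicate (n'+1) (none : Letter s))) = (s : ℤ) := by
        simp [betaL, List.replicate_succ]
      rw [hal, hbe]
      cases m with
      | zero =>
        simp only [nuP, mul_zero, zero_add]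
        rw [ih 0 (by omega)]
        try simp only [Nat.zero_add, Nat.sub_zero]
        rw [cheb_step s n' (n'+1), genCheb_coeff_eq_zero s n' (n'+1+1) (by omega)]
        ring
      | succ m' =>
        simp only [nuP]
        by_cases hmn : m' + 1 ≤ n' + 1
        · rw [ih m' (by omega), ih (m'+1) hmn]
          obtain ⟨d, hd⟩ : ∃ d, n' + 1 - (m'+1) = d := ⟨_, rfl⟩
          rw [(by omega : n' + 1 + 1 - (m'+1) = d + 1), (by omega : n' + 1 - m' = d + 1), hd,
            (by omega : m' + 1 + (n' + 1 + 1) = (m' + (n'+1)) + 1 + 1),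
            (by omega : m' + 1 + (n' + 1) = (m' + (n'+1)) + 1)]
          rw [cheb_step s (m' + (n'+1)) d]
          ring
        · have hmn' : m' = n' + 1 := by omega
          rw [nuF_rep_none_zero h0 (by omega : n' + 1 < m' + 1), ih m' (by omega)]
          rw [(by omega : n' + 1 - m' = 0), (by omega : n' + 1 + 1 - (m'+1) = 0),
            (by omega : m' + 1 + (n' + 1 + 1) = (m' + (n'+1)) + 1 + 1)]
          rw [cheb_step0 s (m' + (n'+1))]
          ring

end BSV

/-- Main theorem (generalizing the Björner–Sagan–Vatter conjecture): for `0 ≤ m ≤ n`,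
`μ(a_1^m, c^n)` is the coefficient of `X^{n−m}` in the generalized Chebyshev polynomial
`T^s_{m+n}`. For `s = 2` this is the conjecture about Chebyshev polynomials of the
first kind. -/
theorem mu_eq_genCheb_coeff (s : ℕ) (hs : 1 ≤ s)
    (μ : List (Letter s) → List (Letter s) → ℤ)
    (hrefl : ∀ u, μ u u = 1)
    (hnle : ∀ u v, ¬ WLE u v → μ u v = 0)
    (hsum : ∀ u v, WLE u v → u ≠ v → ∑ᶠ z ∈ {z : List (Letter s) | WLE u z ∧ WLE z v}, μ u z = 0)
    (m n : ℕ) (hmn : m ≤ n) :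
    μ (List.replicate m (some (⟨0, hs⟩ : Fin s) : Letter s)) (List.replicate n (none : Letter s))
      = (genCheb s (m + n)).coeff (n - m) := by
  have h0 : ((⟨0, hs⟩ : Fin s) : ℕ) = 0 := rfl
  rw [BSV.mu_eq_nu ⟨0, hs⟩ h0 μ hrefl hnle hsum
    (BSV.rankW (List.replicate n (none : Letter s)) + 1) _ (Nat.lt_succ_self _) m]
  exact BSV.nuF_cheb ⟨0, hs⟩ h0 n m hmn
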